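/- Let n ≥ 2 and i : Fin n. The (n+1)-qubit dictatorship state Δ⁺_i (defined by Δ⁺_i(s) = 2^(−n/2) if s(Fin.last n) = s(i) and 0 otherwise) is contextual when each of the n+1 parties chooses between the measurements A and B: there is no probability distribution d on global assignments g : Fin (n+1) → M → Bool such that for every context c and outcome o, the total d-probability of {g : ∀ k, g k (c k) = o k} equals the squared modulus of the amplitude of o in c. Likewise, Δ⁻_i (defined with s(Fin.last n) = ¬ s(i)) is contextual when each party chooses between the measurements C and D. -/

import Mathlib

noncomputable section

/-- Inner product of two `m`-qubit states `(Fin m → Bool) → ℂ`. -/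
def inner' {m : ℕ} (φ ψ : (Fin m → Bool) → ℂ) : ℂ :=
  ∑ s : Fin m → Bool, (starRingEnd ℂ) (φ s) * ψ s

/-- Tensor product of local vectors. -/
def tensor {m : ℕ} (v : Fin m → Bool → ℂ) : (Fin m → Bool) → ℂ :=
  fun s => ∏ i, v i (s i)

/-- Eigenbasis of the observable `A = U(π/2, π/8)`:
`a₊ = (1/√2)(1, e^{iπ/8})`, `a₋ = (1/√2)(1, -e^{iπ/8})`. -/
def vA (o : Bool) : Bool → ℂ := fun b =>
  (Real.sqrt 2 : ℂ)⁻¹ *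
    (if b then (if o then -1 else 1) * Complex.exp (Complex.I * (Real.pi / 8)) else 1)

/-- Eigenbasis of the observable `B = U(π/2, 5π/8)`:
`b₊ = (1/√2)(1, e^{i5π/8})`, `b₋ = (1/√2)(1, -e^{i5π/8})`. -/
def vB (o : Bool) : Bool → ℂ := fun b =>
  (Real.sqrt 2 : ℂ)⁻¹ *
    (if b then (if o then -1 else 1) * Complex.exp (Complex.I * (5 * Real.pi / 8)) else 1)

/-- Eigenbasis of the observable `C = U(π/8, π/2)`:
`c₊ = (cos(π/16), i·sin(π/16))`, `c₋ = (sin(π/16), -i·cos(π/16))`. -/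
def vC (o : Bool) : Bool → ℂ := fun b =>
  if o then (if b then -Complex.I * (Real.cos (Real.pi / 16) : ℂ)
             else (Real.sin (Real.pi / 16) : ℂ))
  else (if b then Complex.I * (Real.sin (Real.pi / 16) : ℂ)
        else (Real.cos (Real.pi / 16) : ℂ))

/-- Eigenbasis of the observable `D = U(5π/8, π/2)`:
`d₊ = (cos(5π/16), i·sin(5π/16))`, `d₋ = (sin(5π/16), -i·cos(5π/16))`. -/
def vD (o : Bool) : Bool → ℂ := fun b =>
  if o then (if b then -Complex.I * (Real.cos (5 * Real.pi / 16) : ℂ)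
             else (Real.sin (5 * Real.pi / 16) : ℂ))
  else (if b then Complex.I * (Real.sin (5 * Real.pi / 16) : ℂ)
        else (Real.cos (5 * Real.pi / 16) : ℂ))

/-- Each party chooses between `A` (measurement `false`) and `B` (`true`). -/
def mAB : Bool → Bool → Bool → ℂ := fun m => if m then vB else vA

/-- Each party chooses between `C` (measurement `false`) and `D` (`true`). -/
def mCD : Bool → Bool → Bool → ℂ := fun m => if m then vD else vC

/-- The `(n+1)`-qubit dictatorship state `Δ⁺ᵢ`: the last qubit equals qubit `i`. -/
def DeltaPN (n : ℕ) (i : Fin n) : (Fin (n + 1) → Bool) → ℂ :=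
  fun s => if s (Fin.last n) = s i.castSucc then (Real.sqrt (2 ^ n) : ℂ)⁻¹ else 0

/-- The `(n+1)`-qubit dictatorship state `Δ⁻ᵢ`: the last qubit is the negation
of qubit `i`. -/
def DeltaMN (n : ℕ) (i : Fin n) : (Fin (n + 1) → Bool) → ℂ :=
  fun s => if s (Fin.last n) = !(s i.castSucc) then (Real.sqrt (2 ^ n) : ℂ)⁻¹ else 0

/-- `ψ` with measurements `v` at each of the `n+1` parties admits a local
hidden-variable model: a probability distribution on global assignments
reproducing all the quantum probabilities. -/
def HasLHV (n : ℕ) (ψ : (Fin (n + 1) → Bool) → ℂ) (v : Bool → Bool → Bool → ℂ) : Prop :=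
  ∃ d : (Fin (n + 1) → Bool → Bool) → ℝ,
    (∀ g, 0 ≤ d g) ∧ (∑ g : Fin (n + 1) → Bool → Bool, d g) = 1 ∧
    ∀ (c : Fin (n + 1) → Bool) (o : Fin (n + 1) → Bool),
      (∑ g ∈ Finset.univ.filter fun g : Fin (n + 1) → Bool → Bool =>
          ∀ k, g k (c k) = o k, d g)
        = ‖inner' (tensor fun k => v (c k) (o k)) ψ‖ ^ 2


open Finset Complex


local notation "conj'" => (starRingEnd ℂ)

lemma amp_aux (n : ℕ) (i : Fin n) (e : Bool → Bool) (c : ℂ) (v : Fin (n+1) → Bool → ℂ) :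
    (∑ s : Fin (n+1) → Bool,
        conj' (∏ k, v k (s k)) * (if s (Fin.last n) = e (s i.castSucc) then c else 0))
    = c * ∏ k : Fin n, ∑ b : Bool,
        conj' (v k.castSucc b) * (if k = i then conj' (v (Fin.last n) (e b)) else 1) := by
  rw [← (Fin.snocEquiv (fun _ => Bool)).sum_comp, Fintype.sum_prod_type]
  simp only [Fin.snocEquiv_apply, Fin.snoc_last, Fin.snoc_castSucc]
  rw [Finset.sum_comm]
  have step1 : ∀ u : Fin n → Bool,
      (∑ b : Bool, conj' (∏ k, v k (Fin.snoc (α := fun _ => Bool) u b k)) * (if b = e (u i) then c else 0))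
      = conj' (∏ k, v k (Fin.snoc (α := fun _ => Bool) u (e (u i)) k)) * c := by
    intro u
    simp [mul_ite]
  simp only [step1]
  have step2 : ∀ u : Fin n → Bool,
      conj' (∏ k, v k (Fin.snoc (α := fun _ => Bool) u (e (u i)) k)) * c
      = c * ∏ k : Fin n, (conj' (v k.castSucc (u k)) *
          (if k = i then conj' (v (Fin.last n) (e (u k))) else 1)) := by
    intro u
    rw [Fin.prod_univ_castSucc]
    simp only [Fin.snoc_last, Fin.snoc_castSucc, map_mul, map_prod]
    rw [Finset.prod_mul_distrib, Finset.prod_ite_eq' Finset.univ i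
      (fun k => conj' (v (Fin.last n) (e (u k))))]
    simp [mul_comm, mul_assoc, mul_left_comm]
  simp only [step2]
  rw [← Finset.mul_sum]
  congr 1
  exact (Fintype.prod_sum (fun k b => conj' (v k.castSucc b) * (if k = i then conj' (v (Fin.last n) (e b)) else 1))).symm

lemma abs_prod_sq {n : ℕ} (c : ℝ) (hc : 0 ≤ c) (f : Fin n → ℂ) :
    ‖(c:ℂ) * ∏ k, f k‖ ^ 2 = c^2 * ∏ k, ‖f k‖ ^ 2 := by
  simp [map_mul, map_prod, mul_pow, Finset.prod_pow, Complex.norm_real, _root_.abs_of_nonneg hc]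

lemma sum_snoc {M : Type*} [AddCommMonoid M] {n : ℕ} (f : (Fin (n+1) → Bool) → M) :
    ∑ s : Fin (n+1) → Bool, f s = ∑ b : Bool, ∑ u : Fin n → Bool, f (Fin.snoc u b) := by
  rw [← (Fin.snocEquiv (fun _ => Bool)).sum_comp, Fintype.sum_prod_type]
  rfl

lemma EQ_gen (n : ℕ) (i : Fin n) (e : Bool → Bool) (v : Bool → Bool → Bool → ℂ)
    (x y T : _) 
    (hsingle : ∑ a : Bool, ‖∑ t : Bool, conj' (v false a t)‖ ^ 2 = 2)
    (hpair : ∀ b : Bool, ∑ a : Bool, (if b = a then (1:ℝ) else -1) *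
        ‖∑ t : Bool, conj' (v x a t) * conj' (v y b (e t))‖ ^ 2 = T) :
    ∑ o : Fin (n+1) → Bool, (if o (Fin.last n) = o i.castSucc then (1:ℝ) else -1) *
      ‖inner' (tensor fun k =>
          v (if k = Fin.last n then y else if k = i.castSucc then x else false) (o k))
        (fun s => if s (Fin.last n) = e (s i.castSucc)
                  then (Real.sqrt (2 ^ n) : ℂ)⁻¹ else 0)‖ ^ 2
    = T := by
  classical
  set L := Fin.last n with hL
  -- Q-factor
  set Q : Fin n → Bool → Bool → ℝ := fun k a b =>
    ‖∑ t : Bool, conj' (v (if k = i then x else false) a t) *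
      (if k = i then conj' (v y b (e t)) else 1)‖ ^ 2 with hQ
  have hamp : ∀ o : Fin (n+1) → Bool,
      ‖inner' (tensor fun k =>
          v (if k = L then y else if k = i.castSucc then x else false) (o k))
        (fun s => if s L = e (s i.castSucc) then (Real.sqrt (2 ^ n) : ℂ)⁻¹ else 0)‖ ^ 2
      = (2^n : ℝ)⁻¹ * ∏ k : Fin n, Q k (o k.castSucc) (o L) := by
    intro o
    have := amp_aux n i e ((Real.sqrt (2 ^ n) : ℂ)⁻¹)
      (fun k => v (if k = L then y else if k = i.castSucc then x else false) (o k))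
    rw [show inner' (tensor fun k =>
          v (if k = L then y else if k = i.castSucc then x else false) (o k))
        (fun s => if s L = e (s i.castSucc) then (Real.sqrt (2 ^ n) : ℂ)⁻¹ else 0)
        = _ from this]
    rw [show ((Real.sqrt (2 ^ n) : ℂ)⁻¹ : ℂ) = ((Real.sqrt (2^n))⁻¹ : ℝ) by push_cast; ring]
    rw [abs_prod_sq _ (by positivity)]
    have h2 : ((Real.sqrt (2^n))⁻¹)^2 = (2^n : ℝ)⁻¹ := by
      rw [← Real.sqrt_inv]
      exact Real.sq_sqrt (by positivity)
    rw [h2]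
    congr 1
    apply Finset.prod_congr rfl
    intro k _
    have h1 : (k.castSucc : Fin (n+1)) ≠ L := (Fin.castSucc_lt_last k).ne
    have h3 : (L : Fin (n+1)) ≠ i.castSucc := (Fin.castSucc_lt_last i).ne'
    by_cases hk : k = i
    · subst hk
      simp [hQ, h1, h3, Fin.castSucc_inj, hL.symm]
    · have : (k.castSucc : Fin (n+1)) ≠ i.castSucc := by
        simp [Fin.castSucc_inj, hk]
      simp [hQ, h1, h3, hk, this]
  simp only [hamp]
  rw [sum_snoc (fun o : Fin (n+1) → Bool =>
    (if o L = o i.castSucc then (1:ℝ) else -1) * ((2^n : ℝ)⁻¹ * ∏ k : Fin n, Q k (o k.castSucc) (o L)))]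
  have hsnoc : ∀ (u : Fin n → Bool) (b : Bool),
      (if (Fin.snoc (α := fun _ => Bool) u b) L = (Fin.snoc (α := fun _ => Bool) u b) i.castSucc then (1:ℝ) else -1) *
        ((2^n : ℝ)⁻¹ * ∏ k : Fin n, Q k ((Fin.snoc (α := fun _ => Bool) u b) k.castSucc) ((Fin.snoc (α := fun _ => Bool) u b) L))
      = (2^n : ℝ)⁻¹ * ∏ k : Fin n,
          ((if k = i then (if b = u k then (1:ℝ) else -1) else 1) * Q k (u k) b) := by
    intro u b
    simp only [hL, Fin.snoc_last, Fin.snoc_castSucc]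
    rw [Finset.prod_mul_distrib, Finset.prod_ite_eq' Finset.univ i
      (fun k => (if b = u k then (1:ℝ) else -1))]
    simp only [Finset.mem_univ, if_true]
    ring
  simp only [hsnoc]
  have hswap : ∀ b : Bool,
      ∑ u : Fin n → Bool, ∏ k : Fin n,
          ((if k = i then (if b = u k then (1:ℝ) else -1) else 1) * Q k (u k) b)
      = ∏ k : Fin n, ∑ a : Bool, ((if k = i then (if b = a then (1:ℝ) else -1) else 1) * Q k a b) := by
    intro b
    exact (Fintype.prod_sum (fun k a => (if k = i then (if b = a then (1:ℝ) else -1) else 1) * Q k a b)).symm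
  have hval : ∀ b : Bool,
      ∏ k : Fin n, ∑ a : Bool, ((if k = i then (if b = a then (1:ℝ) else -1) else 1) * Q k a b)
      = T * 2^(n-1) := by
    intro b
    rw [← Finset.mul_prod_erase Finset.univ _ (Finset.mem_univ i)]
    have hi : ∑ a : Bool, ((if i = i then (if b = a then (1:ℝ) else -1) else 1) * Q i a b) = T := by
      simp only [if_pos rfl, hQ, if_pos rfl]
      exact hpair b
    have ho : ∀ k ∈ Finset.univ.erase i,
        ∑ a : Bool, ((if k = i then (if b = a then (1:ℝ) else -1) else 1) * Q k a b) = 2 := by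
      intro k hk
      have hki : k ≠ i := (Finset.mem_erase.mp hk).1
      simp only [if_neg hki, one_mul, hQ, if_neg hki, mul_one]
      exact hsingle
    rw [hi, Finset.prod_congr rfl ho, Finset.prod_const]
    congr 1
    simp [Finset.card_erase_of_mem]
  simp only [← Finset.mul_sum, hswap, hval]
  have hn1 : n - 1 + 1 = n := Nat.succ_pred_eq_of_pos i.pos
  have h2n : (∑ _i : Bool, (2:ℝ)^(n-1)) = 2^n := by
    rw [Fintype.sum_bool, ← two_mul, ← pow_succ', hn1]
  rw [h2n]
  field_simp

lemma hexp (θ : ℝ) : Complex.exp (Complex.I * θ) =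
    (Real.cos θ : ℂ) + (Real.sin θ : ℂ) * Complex.I := by
  rw [mul_comm, Complex.exp_mul_I]; simp

lemma hexp8 : Complex.exp (Complex.I * ((Real.pi : ℂ) / 8)) =
    (Real.cos (Real.pi/8) : ℂ) + (Real.sin (Real.pi/8) : ℂ) * Complex.I := by
  rw [show ((Real.pi : ℂ) / 8) = ((Real.pi/8 : ℝ) : ℂ) by push_cast; ring, hexp]

lemma singleAB : ∑ a : Bool, ‖∑ t : Bool, conj' (vA a t)‖ ^ 2 = 2 := by
  have h2 : Real.sqrt 2 ^ 2 = 2 := Real.sq_sqrt (by norm_num)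
  have h2' : Real.sqrt 2 ≠ 0 := by positivity
  simp only [Fintype.sum_bool, vA, hexp8, if_true, if_false]
  simp only [Complex.sq_norm, Complex.normSq_apply, map_mul, map_add, map_one, map_inv₀,
    Complex.conj_ofReal, map_neg, Complex.conj_I]
  simp [Complex.add_re, Complex.add_im, Complex.mul_re, Complex.mul_im, Complex.inv_re,
    Complex.inv_im, Complex.normSq_apply]
  have e1 : Real.sqrt (2 + Real.sqrt 2) ^ 2 = 2 + Real.sqrt 2 :=
    Real.sq_sqrt (by positivity)
  have hle : Real.sqrt 2 ≤ 2 := by nlinarith [Real.sqrt_nonneg 2]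
  have e2 : Real.sqrt (2 - Real.sqrt 2) ^ 2 = 2 - Real.sqrt 2 :=
    Real.sq_sqrt (by nlinarith)
  nlinarith [e1, e2, h2, Real.sqrt_nonneg 2]

lemma hexp58 : Complex.exp (Complex.I * (5 * (Real.pi : ℂ) / 8)) =
    (Real.cos (5*Real.pi/8) : ℂ) + (Real.sin (5*Real.pi/8) : ℂ) * Complex.I := by
  rw [show (5 * (Real.pi : ℂ) / 8) = ((5*Real.pi/8 : ℝ) : ℂ) by push_cast; ring, hexp]

set_option maxHeartbeats 1000000 in
lemma pairAB (x y b : Bool) :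
    ∑ a : Bool, (if b = a then (1:ℝ) else -1) *
      ‖∑ t : Bool, conj' (mAB x a t) * conj' (mAB y b t)‖ ^ 2
    = Real.cos ((if x then 5*Real.pi/8 else Real.pi/8) + (if y then 5*Real.pi/8 else Real.pi/8)) := by
  have hr : (Real.sqrt 2)⁻¹ ^ 2 = 1/2 := by
    rw [← Real.sqrt_inv, Real.sq_sqrt (by norm_num)]; norm_num
  have p1 := Real.sin_sq_add_cos_sq (Real.pi/8)
  have p2 := Real.sin_sq_add_cos_sq (5*Real.pi/8)
  cases x <;> cases y <;> cases b <;>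
  · rw [Real.cos_add]
    simp only [Fintype.sum_bool, mAB, vA, vB, hexp8, hexp58, if_true, if_false,
      Bool.false_eq_true, Bool.true_eq_false, cond_false, cond_true, ← Complex.ofReal_inv]
    simp only [Complex.sq_norm, Complex.normSq_apply, map_mul, map_add, map_one,
      Complex.conj_ofReal, map_neg, Complex.conj_I, one_mul, neg_mul]
    simp only [Complex.add_re, Complex.add_im, Complex.mul_re, Complex.mul_im,
      Complex.neg_re, Complex.neg_im, Complex.I_re,
      Complex.I_im, Complex.one_re, Complex.one_im, Complex.ofReal_re, Complex.ofReal_im]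
    generalize hg : (Real.sqrt 2)⁻¹ = r at hr
    have h4 : r ^ 4 = 1/4 := by nlinarith
    ring_nf
    simp only [h4, hr]
    ring_nf
    try ring
    try nlinarith [p1, p2]

lemma singleCD : ∑ a : Bool, ‖∑ t : Bool, conj' (vC a t)‖ ^ 2 = 2 := by
  have p1 := Real.sin_sq_add_cos_sq (Real.pi/16)
  simp only [Fintype.sum_bool, vC, if_true, if_false, Bool.false_eq_true, Bool.true_eq_false]
  simp only [Complex.sq_norm, Complex.normSq_apply, map_mul, map_add, map_one,
    Complex.conj_ofReal, map_neg, Complex.conj_I, one_mul, neg_mul]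
  simp only [Complex.add_re, Complex.add_im, Complex.mul_re, Complex.mul_im,
    Complex.neg_re, Complex.neg_im, Complex.I_re, Complex.I_im, Complex.one_re,
    Complex.one_im, Complex.ofReal_re, Complex.ofReal_im]
  nlinarith [p1]

set_option maxHeartbeats 1000000 in
lemma pairCD (x y b : Bool) :
    ∑ a : Bool, (if b = a then (1:ℝ) else -1) *
      ‖∑ t : Bool, conj' (mCD x a t) * conj' (mCD y b (!t))‖ ^ 2
    = -Real.cos (2*((if x then 5*Real.pi/16 else Real.pi/16) +
        (if y then 5*Real.pi/16 else Real.pi/16))) := by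
  have p1 := Real.sin_sq_add_cos_sq (Real.pi/16)
  have p2 := Real.sin_sq_add_cos_sq (5*Real.pi/16)
  cases x <;> cases y <;> cases b <;>
  · rw [Real.cos_two_mul, Real.cos_add]
    simp only [Fintype.sum_bool, mCD, vC, vD, if_true, if_false,
      Bool.false_eq_true, Bool.true_eq_false, Bool.not_true, Bool.not_false]
    simp only [Complex.sq_norm, Complex.normSq_apply, map_mul, map_add, map_one,
      Complex.conj_ofReal, map_neg, Complex.conj_I, one_mul, neg_mul]
    simp only [Complex.add_re, Complex.add_im, Complex.mul_re, Complex.mul_im,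
      Complex.neg_re, Complex.neg_im, Complex.I_re, Complex.I_im, Complex.one_re,
      Complex.one_im, Complex.ofReal_re, Complex.ofReal_im]
    nlinarith [p1, p2]


lemma EL_gen {n : ℕ} (d : (Fin (n+1) → Bool → Bool) → ℝ)
    (c : Fin (n+1) → Bool) (I L : Fin (n+1)) :
    ∑ o : Fin (n+1) → Bool, (if o L = o I then (1:ℝ) else -1) *
      (∑ g ∈ Finset.univ.filter fun g : Fin (n+1) → Bool → Bool =>
          ∀ k, g k (c k) = o k, d g)
    = ∑ g : Fin (n+1) → Bool → Bool,
        (if g L (c L) = g I (c I) then (1:ℝ) else -1) * d g := by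
  classical
  simp only [Finset.sum_filter, Finset.mul_sum]
  rw [Finset.sum_comm]
  apply Finset.sum_congr rfl
  intro g _
  have hcond : ∀ o : Fin (n+1) → Bool,
      (∀ k, g k (c k) = o k) ↔ (fun k => g k (c k)) = o := by
    intro o; rw [funext_iff]
  simp only [hcond]
  rw [Finset.sum_eq_single (fun k => g k (c k))]
  · simp
  · intro o _ ho
    simp [Ne.symm ho]
  · simp

lemma chsh_key (p q u w : Bool) :
    (if u = p then (1:ℝ) else -1) - (if w = p then (1:ℝ) else -1)
      - (if u = q then (1:ℝ) else -1) - (if w = q then (1:ℝ) else -1) ≤ 2 := by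
  rcases p <;> rcases q <;> rcases u <;> rcases w <;> norm_num

lemma chsh_key' (p q u w : Bool) :
    -(if u = p then (1:ℝ) else -1) + (if w = p then (1:ℝ) else -1)
      + (if u = q then (1:ℝ) else -1) + (if w = q then (1:ℝ) else -1) ≤ 2 := by
  rcases p <;> rcases q <;> rcases u <;> rcases w <;> norm_num

lemma cosv1 : Real.cos (Real.pi/8 + Real.pi/8) = Real.sqrt 2 / 2 := by
  rw [show Real.pi/8 + Real.pi/8 = Real.pi/4 by ring]; exact Real.cos_pi_div_four

lemma cosv2 : Real.cos (Real.pi/8 + 5*Real.pi/8) = -(Real.sqrt 2 / 2) := by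
  rw [show Real.pi/8 + 5*Real.pi/8 = Real.pi - Real.pi/4 by ring, Real.cos_pi_sub,
    Real.cos_pi_div_four]

lemma cosv3 : Real.cos (5*Real.pi/8 + Real.pi/8) = -(Real.sqrt 2 / 2) := by
  rw [show 5*Real.pi/8 + Real.pi/8 = Real.pi - Real.pi/4 by ring, Real.cos_pi_sub,
    Real.cos_pi_div_four]

lemma cosv4 : Real.cos (5*Real.pi/8 + 5*Real.pi/8) = -(Real.sqrt 2 / 2) := by
  rw [show 5*Real.pi/8 + 5*Real.pi/8 = Real.pi + Real.pi/4 by ring, Real.cos_add]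
  rw [Real.cos_pi, Real.sin_pi, Real.cos_pi_div_four]; ring

lemma cosw1 : Real.cos (2*(Real.pi/16 + Real.pi/16)) = Real.sqrt 2 / 2 := by
  rw [show 2*(Real.pi/16 + Real.pi/16) = Real.pi/4 by ring]; exact Real.cos_pi_div_four

lemma cosw2 : Real.cos (2*(Real.pi/16 + 5*Real.pi/16)) = -(Real.sqrt 2 / 2) := by
  rw [show 2*(Real.pi/16 + 5*Real.pi/16) = Real.pi - Real.pi/4 by ring, Real.cos_pi_sub,
    Real.cos_pi_div_four]

lemma cosw3 : Real.cos (2*(5*Real.pi/16 + Real.pi/16)) = -(Real.sqrt 2 / 2) := by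
  rw [show 2*(5*Real.pi/16 + Real.pi/16) = Real.pi - Real.pi/4 by ring, Real.cos_pi_sub,
    Real.cos_pi_div_four]

lemma cosw4 : Real.cos (2*(5*Real.pi/16 + 5*Real.pi/16)) = -(Real.sqrt 2 / 2) := by
  rw [show 2*(5*Real.pi/16 + 5*Real.pi/16) = Real.pi + Real.pi/4 by ring, Real.cos_add]
  rw [Real.cos_pi, Real.sin_pi, Real.cos_pi_div_four]; ring

/-- For `n ≥ 2`, the `(n+1)`-qubit dictatorship state `Δ⁺ᵢ` is contextual for
the `A`/`B` measurements and `Δ⁻ᵢ` is contextual for the `C`/`D` measurements. -/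
theorem dictatorship_contextual_n (n : ℕ) (hn : 2 ≤ n) (i : Fin n) :
    ¬ HasLHV n (DeltaPN n i) mAB ∧ ¬ HasLHV n (DeltaMN n i) mCD := by
  have hIL : i.castSucc ≠ Fin.last n := (Fin.castSucc_lt_last i).ne
  have hs2 : Real.sqrt 2 ^ 2 = 2 := Real.sq_sqrt (by norm_num)
  have hs0 : 0 ≤ Real.sqrt 2 := Real.sqrt_nonneg 2
  constructor
  · rintro ⟨d, hd0, hdsum, hd⟩
    have hE : ∀ x y : Bool,
        (∑ g : Fin (n+1) → Bool → Bool,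
            (if g (Fin.last n) y = g i.castSucc x then (1:ℝ) else -1) * d g)
        = Real.cos ((if x then 5*Real.pi/8 else Real.pi/8) +
            (if y then 5*Real.pi/8 else Real.pi/8)) := by
      intro x y
      set c : Fin (n+1) → Bool :=
        fun j => if j = Fin.last n then y else if j = i.castSucc then x else false with hc
      have hcI : c i.castSucc = x := by simp [hc, hIL]
      have hcL : c (Fin.last n) = y := by simp [hc]
      have e1 := EL_gen d c i.castSucc (Fin.last n)
      rw [hcI, hcL] at e1
      rw [← e1]
      have e2 : ∀ o : Fin (n+1) → Bool,
          (∑ g ∈ Finset.univ.filter fun g : Fin (n+1) → Bool → Bool =>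
              ∀ k, g k (c k) = o k, d g)
          = ‖inner' (tensor fun k => mAB (c k) (o k)) (DeltaPN n i)‖ ^ 2 :=
        fun o => hd c o
      calc ∑ o : Fin (n+1) → Bool, (if o (Fin.last n) = o i.castSucc then (1:ℝ) else -1) *
              (∑ g ∈ Finset.univ.filter fun g : Fin (n+1) → Bool → Bool =>
                ∀ k, g k (c k) = o k, d g)
          = ∑ o : Fin (n+1) → Bool, (if o (Fin.last n) = o i.castSucc then (1:ℝ) else -1) *
              ‖inner' (tensor fun k => mAB (c k) (o k)) (DeltaPN n i)‖ ^ 2 := by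
            exact Finset.sum_congr rfl fun o _ => by rw [e2 o]
        _ = _ := EQ_gen n i (fun b => b) mAB x y _ singleAB (pairAB x y)
    have k1 := hE false false
    have k2 := hE false true
    have k3 := hE true false
    have k4 := hE true true
    simp only [Bool.false_eq_true, if_false, if_true, cosv1, cosv2, cosv3, cosv4] at k1 k2 k3 k4
    have hb : ∑ g : Fin (n+1) → Bool → Bool,
        ((if g (Fin.last n) false = g i.castSucc false then (1:ℝ) else -1)
          - (if g (Fin.last n) true = g i.castSucc false then (1:ℝ) else -1)
          - (if g (Fin.last n) false = g i.castSucc true then (1:ℝ) else -1)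
          - (if g (Fin.last n) true = g i.castSucc true then (1:ℝ) else -1)) * d g ≤ 2 := by
      calc _ ≤ ∑ g : Fin (n+1) → Bool → Bool, 2 * d g := by
            apply Finset.sum_le_sum
            intro g _
            exact mul_le_mul_of_nonneg_right
              (chsh_key (g i.castSucc false) (g i.castSucc true)
                (g (Fin.last n) false) (g (Fin.last n) true)) (hd0 g)
        _ = 2 := by rw [← Finset.mul_sum, hdsum, mul_one]
    have heq : ∑ g : Fin (n+1) → Bool → Bool,
        ((if g (Fin.last n) false = g i.castSucc false then (1:ℝ) else -1)
          - (if g (Fin.last n) true = g i.castSucc false then (1:ℝ) else -1)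
          - (if g (Fin.last n) false = g i.castSucc true then (1:ℝ) else -1)
          - (if g (Fin.last n) true = g i.castSucc true then (1:ℝ) else -1)) * d g
        = 2 * Real.sqrt 2 := by
      simp only [sub_mul, Finset.sum_sub_distrib]
      rw [k1, k2, k3, k4]; ring
    rw [heq] at hb
    nlinarith [hs2, hs0]
  · rintro ⟨d, hd0, hdsum, hd⟩
    have hE : ∀ x y : Bool,
        (∑ g : Fin (n+1) → Bool → Bool,
            (if g (Fin.last n) y = g i.castSucc x then (1:ℝ) else -1) * d g)
        = -Real.cos (2*((if x then 5*Real.pi/16 else Real.pi/16) +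
            (if y then 5*Real.pi/16 else Real.pi/16))) := by
      intro x y
      set c : Fin (n+1) → Bool :=
        fun j => if j = Fin.last n then y else if j = i.castSucc then x else false with hc
      have hcI : c i.castSucc = x := by simp [hc, hIL]
      have hcL : c (Fin.last n) = y := by simp [hc]
      have e1 := EL_gen d c i.castSucc (Fin.last n)
      rw [hcI, hcL] at e1
      rw [← e1]
      have e2 : ∀ o : Fin (n+1) → Bool,
          (∑ g ∈ Finset.univ.filter fun g : Fin (n+1) → Bool → Bool =>
              ∀ k, g k (c k) = o k, d g)
          = ‖inner' (tensor fun k => mCD (c k) (o k)) (DeltaMN n i)‖ ^ 2 :=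
        fun o => hd c o
      calc ∑ o : Fin (n+1) → Bool, (if o (Fin.last n) = o i.castSucc then (1:ℝ) else -1) *
              (∑ g ∈ Finset.univ.filter fun g : Fin (n+1) → Bool → Bool =>
                ∀ k, g k (c k) = o k, d g)
          = ∑ o : Fin (n+1) → Bool, (if o (Fin.last n) = o i.castSucc then (1:ℝ) else -1) *
              ‖inner' (tensor fun k => mCD (c k) (o k)) (DeltaMN n i)‖ ^ 2 := by
            exact Finset.sum_congr rfl fun o _ => by rw [e2 o]
        _ = _ := EQ_gen n i (fun b => !b) mCD x y _ singleCD (pairCD x y)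
    have k1 := hE false false
    have k2 := hE false true
    have k3 := hE true false
    have k4 := hE true true
    simp only [Bool.false_eq_true, if_false, if_true, cosw1, cosw2, cosw3, cosw4] at k1 k2 k3 k4
    have hb : ∑ g : Fin (n+1) → Bool → Bool,
        (-(if g (Fin.last n) false = g i.castSucc false then (1:ℝ) else -1)
          + (if g (Fin.last n) true = g i.castSucc false then (1:ℝ) else -1)
          + (if g (Fin.last n) false = g i.castSucc true then (1:ℝ) else -1)
          + (if g (Fin.last n) true = g i.castSucc true then (1:ℝ) else -1)) * d g ≤ 2 := by
      calc _ ≤ ∑ g : Fin (n+1) → Bool → Bool, 2 * d g := by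
            apply Finset.sum_le_sum
            intro g _
            exact mul_le_mul_of_nonneg_right
              (chsh_key' (g i.castSucc false) (g i.castSucc true)
                (g (Fin.last n) false) (g (Fin.last n) true)) (hd0 g)
        _ = 2 := by rw [← Finset.mul_sum, hdsum, mul_one]
    have heq : ∑ g : Fin (n+1) → Bool → Bool,
        (-(if g (Fin.last n) false = g i.castSucc false then (1:ℝ) else -1)
          + (if g (Fin.last n) true = g i.castSucc false then (1:ℝ) else -1)
          + (if g (Fin.last n) false = g i.castSucc true then (1:ℝ) else -1)
          + (if g (Fin.last n) true = g i.castSucc true then (1:ℝ) else -1)) * d g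
        = 2 * Real.sqrt 2 := by
      simp only [add_mul, neg_mul, Finset.sum_add_distrib, Finset.sum_neg_distrib]
      rw [k1, k2, k3, k4]; ring
    rw [heq] at hb
    nlinarith [hs2, hs0]
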